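/- Let Y = Φ Mᵀ + E + N where Y ∈ ℝ^{N×m}, Φ ∈ ℝ^{N×d}, M ∈ ℝ^{m×d}, and let M̂ᵀ = (ΦᵀΦ + λI)^{-1} Φᵀ Y be the ridge regression solution with λ > 0. Then √(Tr((M̂ − M) V (M̂ − M)ᵀ)) ≤ √(Tr(EᵀΦ V^{-1} Φᵀ E)) + √(Tr(NᵀΦ V^{-1} Φᵀ N)) + √λ ‖M‖_F, where V = ΦᵀΦ + λI. -/

import Mathlib

open Matrix

/-- Frobenius norm of a real matrix. -/
noncomputable def frob {m n : ℕ} (A : Matrix (Fin m) (Fin n) ℝ) : ℝ :=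
  Real.sqrt (∑ i, ∑ j, A i j ^ 2)

lemma posDef_smul_one' {n : ℕ} {lam : ℝ} (h : 0 < lam) :
    (lam • (1 : Matrix (Fin n) (Fin n) ℝ)).PosDef := by
  rw [Matrix.smul_one_eq_diagonal]
  exact Matrix.posDef_diagonal_iff.mpr fun _ => h

lemma trace_quad_nonneg' {d m : ℕ} {W : Matrix (Fin d) (Fin d) ℝ} (hW : W.PosSemidef)
    (X : Matrix (Fin d) (Fin m) ℝ) : 0 ≤ Matrix.trace (Xᵀ * W * X) := by
  have h := hW.conjTranspose_mul_mul_same X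
  rw [Matrix.conjTranspose_eq_transpose_of_trivial] at h
  rw [Matrix.trace]
  refine Finset.sum_nonneg fun i _ => ?_
  have := h.dotProduct_mulVec_nonneg (Pi.single i 1)
  simpa [dotProduct, Matrix.mulVec, Pi.single_apply] using this

lemma trace_symm' {d m : ℕ} {W : Matrix (Fin d) (Fin d) ℝ} (hWt : Wᵀ = W)
    (A B : Matrix (Fin d) (Fin m) ℝ) :
    Matrix.trace (Bᵀ * W * A) = Matrix.trace (Aᵀ * W * B) := by
  rw [← Matrix.trace_transpose (Bᵀ * W * A)]
  simp [Matrix.transpose_mul, hWt, Matrix.mul_assoc]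

lemma trace_cs' {d m : ℕ} {W : Matrix (Fin d) (Fin d) ℝ} (hW : W.PosSemidef)
    (A B : Matrix (Fin d) (Fin m) ℝ) :
    (Matrix.trace (Aᵀ * W * B)) ^ 2 ≤
      Matrix.trace (Aᵀ * W * A) * Matrix.trace (Bᵀ * W * B) := by
  have hWt : Wᵀ = W := by
    have := hW.isHermitian
    rwa [Matrix.IsHermitian, Matrix.conjTranspose_eq_transpose_of_trivial] at this
  have key : ∀ t : ℝ, 0 ≤ Matrix.trace (Bᵀ * W * B) * (t * t)
      + (2 * Matrix.trace (Aᵀ * W * B)) * t + Matrix.trace (Aᵀ * W * A) := by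
    intro t
    have h0 := trace_quad_nonneg' hW (A + t • B)
    have hexp : (A + t • B)ᵀ * W * (A + t • B)
        = Aᵀ * W * A + t • (Aᵀ * W * B) + t • (Bᵀ * W * A) + (t * t) • (Bᵀ * W * B) := by
      simp only [Matrix.transpose_add, Matrix.transpose_smul, Matrix.add_mul,
        Matrix.mul_add, Matrix.smul_mul, Matrix.mul_smul, smul_smul, smul_add]
      abel
    rw [hexp] at h0
    simp only [Matrix.trace_add, Matrix.trace_smul, trace_symm' hWt A B, smul_eq_mul] at h0
    nlinarith [h0]
  have hd := discrim_le_zero key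
  rw [discrim] at hd
  nlinarith [hd]

lemma trace_triangle' {d m : ℕ} {W : Matrix (Fin d) (Fin d) ℝ} (hW : W.PosSemidef)
    (A B : Matrix (Fin d) (Fin m) ℝ) :
    Real.sqrt (Matrix.trace ((A + B)ᵀ * W * (A + B))) ≤
      Real.sqrt (Matrix.trace (Aᵀ * W * A)) + Real.sqrt (Matrix.trace (Bᵀ * W * B)) := by
  have hWt : Wᵀ = W := by
    have := hW.isHermitian
    rwa [Matrix.IsHermitian, Matrix.conjTranspose_eq_transpose_of_trivial] at this
  have ha := trace_quad_nonneg' hW A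
  have hb := trace_quad_nonneg' hW B
  have hcs := trace_cs' hW A B
  have hexp : Matrix.trace ((A + B)ᵀ * W * (A + B))
      = Matrix.trace (Aᵀ * W * A) + 2 * Matrix.trace (Aᵀ * W * B)
        + Matrix.trace (Bᵀ * W * B) := by
    simp only [Matrix.transpose_add, Matrix.add_mul, Matrix.mul_add, Matrix.trace_add,
      trace_symm' hWt A B]
    ring
  rw [hexp]
  have hc : Matrix.trace (Aᵀ * W * B) ≤ Real.sqrt (Matrix.trace (Aᵀ * W * A)) *
      Real.sqrt (Matrix.trace (Bᵀ * W * B)) := by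
    have h1 : Matrix.trace (Aᵀ * W * B) ≤ |Matrix.trace (Aᵀ * W * B)| := le_abs_self _
    have h2 : |Matrix.trace (Aᵀ * W * B)| ≤
        Real.sqrt (Matrix.trace (Aᵀ * W * A) * Matrix.trace (Bᵀ * W * B)) := by
      rw [← Real.sqrt_sq_eq_abs]
      exact Real.sqrt_le_sqrt hcs
    rw [Real.sqrt_mul ha] at h2
    linarith
  have hsa := Real.sq_sqrt ha
  have hsb := Real.sq_sqrt hb
  calc Real.sqrt (Matrix.trace (Aᵀ * W * A) + 2 * Matrix.trace (Aᵀ * W * B)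
        + Matrix.trace (Bᵀ * W * B))
      ≤ Real.sqrt ((Real.sqrt (Matrix.trace (Aᵀ * W * A))
          + Real.sqrt (Matrix.trace (Bᵀ * W * B))) ^ 2) := by
        apply Real.sqrt_le_sqrt; nlinarith
    _ = _ := Real.sqrt_sq (by positivity)

/-- Ridge regression error decomposition: if `Y = Φ Mᵀ + E + N` and
`M̂ᵀ = (ΦᵀΦ + λI)⁻¹ Φᵀ Y`, then with `V = ΦᵀΦ + λI`,
`√Tr((M̂−M) V (M̂−M)ᵀ) ≤ √Tr(EᵀΦ V⁻¹ Φᵀ E) + √Tr(NᵀΦ V⁻¹ Φᵀ N) + √λ ‖M‖_F`. -/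
theorem ridge_error_decomposition {Nn m d : ℕ}
    (Y E Nb : Matrix (Fin Nn) (Fin m) ℝ) (Φ : Matrix (Fin Nn) (Fin d) ℝ)
    (M Mhat : Matrix (Fin m) (Fin d) ℝ) (lam : ℝ) (hlam : 0 < lam)
    (hmodel : Y = Φ * Mᵀ + E + Nb)
    (hMhat : Mhatᵀ = (Φᵀ * Φ + lam • (1 : Matrix (Fin d) (Fin d) ℝ))⁻¹ * (Φᵀ * Y)) :
    Real.sqrt (Matrix.trace ((Mhat - M) *
        (Φᵀ * Φ + lam • (1 : Matrix (Fin d) (Fin d) ℝ)) * (Mhat - M)ᵀ)) ≤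
      Real.sqrt (Matrix.trace
        (Eᵀ * Φ * (Φᵀ * Φ + lam • (1 : Matrix (Fin d) (Fin d) ℝ))⁻¹ * (Φᵀ * E))) +
      Real.sqrt (Matrix.trace
        (Nbᵀ * Φ * (Φᵀ * Φ + lam • (1 : Matrix (Fin d) (Fin d) ℝ))⁻¹ * (Φᵀ * Nb))) +
      Real.sqrt lam * frob M := by
  set V : Matrix (Fin d) (Fin d) ℝ := Φᵀ * Φ + lam • 1 with hVdef
  set C : Matrix (Fin d) (Fin m) ℝ := Φᵀ * E + (Φᵀ * Nb + (-lam) • Mᵀ) with hCdef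
  have hΦΦ : (Φᵀ * Φ).PosSemidef := by
    have := Matrix.posSemidef_conjTranspose_mul_self Φ
    rwa [Matrix.conjTranspose_eq_transpose_of_trivial] at this
  have hV : V.PosDef := Matrix.PosDef.posSemidef_add hΦΦ (posDef_smul_one' hlam)
  have hVdet : IsUnit V.det := (Matrix.isUnit_iff_isUnit_det V).mp hV.isUnit
  have hVVinv : V * V⁻¹ = 1 := Matrix.mul_nonsing_inv V hVdet
  have hVinvV : V⁻¹ * V = 1 := Matrix.nonsing_inv_mul V hVdet
  have hVt : Vᵀ = V := by
    have := hV.isHermitian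
    rwa [Matrix.IsHermitian, Matrix.conjTranspose_eq_transpose_of_trivial] at this
  have hVit : (V⁻¹)ᵀ = V⁻¹ := by rw [Matrix.transpose_nonsing_inv, hVt]
  have hVipsd : (V⁻¹).PosSemidef := hV.inv.posSemidef
  have hD : (Mhat - M)ᵀ = V⁻¹ * C := by
    have h1 : Φᵀ * (Φ * Mᵀ + E + Nb) = V * Mᵀ + C := by
      simp only [hVdef, hCdef, Matrix.mul_add, Matrix.add_mul, Matrix.smul_mul,
        Matrix.one_mul, neg_smul, ← Matrix.mul_assoc]
      abel
    rw [Matrix.transpose_sub, hMhat, hmodel, h1, Matrix.mul_add, ← Matrix.mul_assoc,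
      hVinvV, Matrix.one_mul]
    abel
  have hMM : Mhat - M = Cᵀ * V⁻¹ := by
    have h := congrArg Matrix.transpose hD
    rwa [Matrix.transpose_transpose, Matrix.transpose_mul, hVit] at h
  have hTr : (Mhat - M) * V * (Mhat - M)ᵀ = Cᵀ * V⁻¹ * C := by
    rw [hMM, Matrix.transpose_mul, hVit, Matrix.transpose_transpose]
    calc Cᵀ * V⁻¹ * V * (V⁻¹ * C) = Cᵀ * (V⁻¹ * V) * (V⁻¹ * C) := by
          rw [Matrix.mul_assoc Cᵀ]
      _ = Cᵀ * (V⁻¹ * C) := by rw [hVinvV, Matrix.mul_one]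
      _ = Cᵀ * V⁻¹ * C := by rw [Matrix.mul_assoc]
  -- positive semidefiniteness of `1 - lam • V⁻¹`
  have hS : (Φ * Φᵀ + lam • (1 : Matrix (Fin Nn) (Fin Nn) ℝ)).PosSemidef := by
    refine Matrix.PosSemidef.add ?_ (posDef_smul_one' hlam).posSemidef
    have := Matrix.posSemidef_self_mul_conjTranspose Φ
    rwa [Matrix.conjTranspose_eq_transpose_of_trivial] at this
  have hmid : Φᵀ * (Φ * Φᵀ + lam • (1 : Matrix (Fin Nn) (Fin Nn) ℝ)) * Φ = Φᵀ * Φ * V := by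
    simp only [hVdef, Matrix.mul_add, Matrix.add_mul, Matrix.smul_mul, Matrix.mul_smul,
      Matrix.mul_one, Matrix.one_mul, Matrix.mul_assoc]
  have hWeq : (1 : Matrix (Fin d) (Fin d) ℝ) - lam • V⁻¹
      = (Φ * V⁻¹)ᵀ * (Φ * Φᵀ + lam • (1 : Matrix (Fin Nn) (Fin Nn) ℝ)) * (Φ * V⁻¹) := by
    rw [Matrix.transpose_mul, hVit]
    have h2 : V⁻¹ * Φᵀ * (Φ * Φᵀ + lam • (1 : Matrix (Fin Nn) (Fin Nn) ℝ)) * (Φ * V⁻¹)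
        = V⁻¹ * (Φᵀ * (Φ * Φᵀ + lam • (1 : Matrix (Fin Nn) (Fin Nn) ℝ)) * Φ * V⁻¹) := by
      simp only [Matrix.mul_assoc]
    rw [h2, hmid, Matrix.mul_assoc (Φᵀ * Φ), hVVinv, Matrix.mul_one]
    have h4 : Φᵀ * Φ = V - lam • 1 := by rw [hVdef]; abel
    rw [h4, Matrix.mul_sub, hVinvV, Matrix.mul_smul, Matrix.mul_one]
  have hWpsd : ((1 : Matrix (Fin d) (Fin d) ℝ) - lam • V⁻¹).PosSemidef := by
    rw [hWeq]
    have := hS.conjTranspose_mul_mul_same (Φ * V⁻¹)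
    rwa [Matrix.conjTranspose_eq_transpose_of_trivial] at this
  have hquad := trace_quad_nonneg' hWpsd Mᵀ
  have hexp : Mᵀᵀ * ((1 : Matrix (Fin d) (Fin d) ℝ) - lam • V⁻¹) * Mᵀ
      = M * Mᵀ - lam • (M * V⁻¹ * Mᵀ) := by
    simp only [Matrix.transpose_transpose, Matrix.mul_sub, Matrix.sub_mul, Matrix.mul_smul,
      Matrix.smul_mul, Matrix.mul_one]
  rw [hexp, Matrix.trace_sub, Matrix.trace_smul, smul_eq_mul] at hquad
  have ht0 : 0 ≤ Matrix.trace (M * V⁻¹ * Mᵀ) := by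
    have := trace_quad_nonneg' hVipsd Mᵀ
    rwa [Matrix.transpose_transpose] at this
  have hs : Matrix.trace (M * Mᵀ) = ∑ i, ∑ j, M i j ^ 2 := by
    simp [Matrix.trace, Matrix.mul_apply, Matrix.diag, sq]
  have hXeq : ((-lam) • Mᵀ)ᵀ * V⁻¹ * ((-lam) • Mᵀ) = (lam * lam) • (M * V⁻¹ * Mᵀ) := by
    simp only [Matrix.transpose_smul, Matrix.transpose_transpose, Matrix.smul_mul,
      Matrix.mul_smul, smul_smul, neg_mul_neg]
  have hthird : Real.sqrt (Matrix.trace (((-lam) • Mᵀ)ᵀ * V⁻¹ * ((-lam) • Mᵀ)))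
      ≤ Real.sqrt lam * frob M := by
    rw [hXeq, Matrix.trace_smul, smul_eq_mul]
    have h1 : lam * lam * Matrix.trace (M * V⁻¹ * Mᵀ) ≤ lam * Matrix.trace (M * Mᵀ) := by
      nlinarith
    calc Real.sqrt (lam * lam * Matrix.trace (M * V⁻¹ * Mᵀ))
        ≤ Real.sqrt (lam * Matrix.trace (M * Mᵀ)) := Real.sqrt_le_sqrt h1
      _ = Real.sqrt lam * Real.sqrt (Matrix.trace (M * Mᵀ)) := Real.sqrt_mul hlam.le _
      _ = Real.sqrt lam * frob M := by rw [frob, hs]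
  rw [hTr, hCdef]
  calc Real.sqrt (Matrix.trace ((Φᵀ * E + (Φᵀ * Nb + (-lam) • Mᵀ))ᵀ * V⁻¹
          * (Φᵀ * E + (Φᵀ * Nb + (-lam) • Mᵀ))))
      ≤ Real.sqrt (Matrix.trace ((Φᵀ * E)ᵀ * V⁻¹ * (Φᵀ * E)))
        + Real.sqrt (Matrix.trace ((Φᵀ * Nb + (-lam) • Mᵀ)ᵀ * V⁻¹
            * (Φᵀ * Nb + (-lam) • Mᵀ))) := trace_triangle' hVipsd _ _
    _ ≤ Real.sqrt (Matrix.trace ((Φᵀ * E)ᵀ * V⁻¹ * (Φᵀ * E)))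
        + (Real.sqrt (Matrix.trace ((Φᵀ * Nb)ᵀ * V⁻¹ * (Φᵀ * Nb)))
          + Real.sqrt (Matrix.trace (((-lam) • Mᵀ)ᵀ * V⁻¹ * ((-lam) • Mᵀ)))) := by
        exact add_le_add_right (trace_triangle' hVipsd _ _) _
    _ ≤ Real.sqrt (Matrix.trace (Eᵀ * Φ * V⁻¹ * (Φᵀ * E)))
        + Real.sqrt (Matrix.trace (Nbᵀ * Φ * V⁻¹ * (Φᵀ * Nb)))
        + Real.sqrt lam * frob M := by
        rw [Matrix.transpose_mul, Matrix.transpose_transpose,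
          Matrix.transpose_mul Φᵀ Nb, Matrix.transpose_transpose]
        have := add_le_add_left hthird (Real.sqrt (Matrix.trace (Nbᵀ * Φ * V⁻¹ * (Φᵀ * Nb))))
        linarith [this]
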